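/- Let p be an odd prime and k ∈ ℕ. The quadratic Gauss sum G_{p^k} = Σ_{x=1}^{p^k} e^{2πi x²/p^k} satisfies: G_{p^k} = p^{k/2} if k is even, and G_{p^k} = p^{(k−1)/2} · G_p if k is odd. -/

import Mathlib

open Complex Finset

/-- The quadratic Gauss sum `G_q = Σ_{x=1}^{q} e(x²/q)`. -/
noncomputable def quadGaussSum (q : ℕ) : ℂ :=
  ∑ x ∈ Finset.range q, Complex.exp (2 * Real.pi * Complex.I * ((x + 1 : ℕ)^2) / q)

noncomputable def eq' (q m : ℕ) : ℂ := Complex.exp (2 * Real.pi * Complex.I * m / q)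

lemma eq'_add (q m n : ℕ) : eq' q (m + n) = eq' q m * eq' q n := by
  unfold eq'
  rw [← Complex.exp_add]
  push_cast
  ring_nf

lemma eq'_zero (q : ℕ) : eq' q 0 = 1 := by simp [eq']

lemma eq'_mul_self (q n : ℕ) : eq' q (q * n) = 1 := by
  rcases Nat.eq_zero_or_pos q with h | h
  · simp [eq', h]
  · unfold eq'
    push_cast
    rw [mul_comm (q:ℂ) n, mul_div_assoc, mul_div_cancel_right₀ _ (by exact_mod_cast h.ne')]
    rw [show 2 * (Real.pi:ℂ) * Complex.I * n = n * (2 * Real.pi * Complex.I) by ring]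
    exact Complex.exp_nat_mul_two_pi_mul_I n

lemma eq'_cancel (q d m : ℕ) (hd : d ≠ 0) : eq' (q * d) (m * d) = eq' q m := by
  rcases Nat.eq_zero_or_pos q with h | h
  · simp [eq', h]
  · unfold eq'
    push_cast
    rw [mul_div_assoc, mul_div_mul_right _ _ (by exact_mod_cast hd), ← mul_div_assoc]

lemma sum_eq'_mul (q : ℕ) (hq : q ≠ 0) (m : ℕ) :
    ∑ b ∈ Finset.range q, eq' q (m * b) = if q ∣ m then (q : ℂ) else 0 := by
  have hζ := Complex.isPrimitiveRoot_exp q hq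
  set ζ := Complex.exp (2 * Real.pi * Complex.I / q) with hζdef
  have key : ∀ b : ℕ, eq' q (m * b) = (ζ ^ m) ^ b := by
    intro b
    rw [← pow_mul, hζdef, ← Complex.exp_nat_mul, eq']
    push_cast
    ring_nf
  simp_rw [key]
  by_cases hdvd : q ∣ m
  · rw [if_pos hdvd]
    have : ζ ^ m = 1 := (hζ.pow_eq_one_iff_dvd m).mpr hdvd
    simp [this]
  · rw [if_neg hdvd]
    have hne : ζ ^ m ≠ 1 := fun h => hdvd ((hζ.pow_eq_one_iff_dvd m).mp h)
    rw [geom_sum_eq hne]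
    have : (ζ ^ m) ^ q = 1 := by
      rw [← pow_mul, mul_comm, pow_mul, hζ.pow_eq_one, one_pow]
    rw [this, sub_self, zero_div]

lemma sum_range_mul' (f : ℕ → ℂ) (m n : ℕ) :
    ∑ x ∈ Finset.range (m * n), f x = ∑ b ∈ Finset.range n, ∑ a ∈ Finset.range m, f (a + m * b) := by
  induction n with
  | zero => simp
  | succ n ih =>
    rw [Finset.sum_range_succ, ← ih, Nat.mul_succ, Finset.sum_range_add]
    congr 1
    apply Finset.sum_congr rfl
    intro a _
    congr 1
    omega

lemma sum_range_dvd (g : ℕ → ℂ) (p n : ℕ) (hp : 1 < p) :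
    ∑ a ∈ Finset.range (p * n), (if p ∣ a then g a else 0) = ∑ c ∈ Finset.range n, g (p * c) := by
  rw [sum_range_mul']
  apply Finset.sum_congr rfl
  intro b _
  rw [Finset.sum_eq_single_of_mem 0 (Finset.mem_range.mpr (by omega))]
  · simp
  · intro a ha hane
    rw [if_neg]
    rw [Finset.mem_range] at ha
    intro hdvd
    have : p ∣ a := by
      have := (Nat.dvd_add_right (Dvd.intro b rfl)).mp (by rwa [add_comm] at hdvd)
      exact this
    exact hane (Nat.eq_zero_of_dvd_of_lt this ha)

lemma quadGaussSum_eq (q : ℕ) : quadGaussSum q = ∑ x ∈ Finset.range q, eq' q (x ^ 2) := by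
  have h1 : quadGaussSum q = ∑ x ∈ Finset.range q, eq' q ((x + 1) ^ 2) := by
    unfold quadGaussSum eq'
    apply Finset.sum_congr rfl
    intro x _
    push_cast
    ring_nf
  rw [h1]
  have h2 := Finset.sum_range_succ' (fun x => eq' q (x ^ 2)) q
  have h3 := Finset.sum_range_succ (fun x => eq' q (x ^ 2)) q
  have hq : eq' q (q ^ 2) = eq' q (0 ^ 2) := by
    rw [pow_two, eq'_mul_self]
    simp [eq'_zero]
  have := h2.symm.trans h3
  -- this : ∑ x ∈ range q, eq' q ((x+1)^2) + eq' q 0^2 = ∑ x ∈ range q, eq' q (x^2) + eq' q (q^2)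
  rw [hq] at this
  exact add_right_cancel this

lemma red (p : ℕ) (hp : p.Prime) (hodd : Odd p) (m : ℕ) :
    quadGaussSum (p ^ (m + 2)) = p * quadGaussSum (p ^ m) := by
  have hp1 : 1 < p := hp.one_lt
  have hp0 : (p : ℕ) ≠ 0 := by omega
  rw [quadGaussSum_eq, quadGaussSum_eq]
  have hsplit : p ^ (m + 2) = p ^ (m + 1) * p := by ring
  rw [hsplit, sum_range_mul']
  have hterm : ∀ a b : ℕ, eq' (p ^ (m + 1) * p) ((a + p ^ (m + 1) * b) ^ 2)
      = eq' (p ^ (m + 2)) (a ^ 2) * eq' p ((2 * a) * b) := by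
    intro a b
    have hnat : (a + p ^ (m + 1) * b) ^ 2
        = (a ^ 2 + ((2 * a) * b) * p ^ (m + 1)) + p ^ (m + 2) * (p ^ m * b ^ 2) := by ring
    rw [← hsplit, hnat, eq'_add, eq'_add, eq'_mul_self, mul_one]
    congr 1
    have : p ^ (m + 2) = p * p ^ (m + 1) := by ring
    rw [this, eq'_cancel _ _ _ (by positivity)]
  rw [Finset.sum_comm]
  have hinner : ∀ a : ℕ, ∑ b ∈ Finset.range p, eq' (p ^ (m + 1) * p) ((a + p ^ (m + 1) * b) ^ 2)
      = eq' (p ^ (m + 2)) (a ^ 2) * (if p ∣ a then (p : ℂ) else 0) := by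
    intro a
    simp_rw [hterm a]
    rw [← Finset.mul_sum, sum_eq'_mul p hp0 (2 * a)]
    congr 1
    have h2 : ¬ p ∣ 2 := by
      intro h
      have := (Nat.prime_dvd_prime_iff_eq hp Nat.prime_two).mp h
      rw [Nat.odd_iff] at hodd
      omega
    have : p ∣ 2 * a ↔ p ∣ a := by
      rw [hp.dvd_mul]
      tauto
    simp [this]
  simp_rw [hinner]
  simp_rw [mul_ite, mul_zero]
  have hsplit2 : p ^ (m + 1) = p * p ^ m := by ring
  rw [hsplit2, sum_range_dvd _ _ _ hp1]
  rw [Finset.mul_sum]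
  apply Finset.sum_congr rfl
  intro c _
  have h1 : (p * c) ^ 2 = c ^ 2 * p ^ 2 := by ring
  have h2 : p ^ (m + 2) = p ^ m * p ^ 2 := by ring
  rw [h1, h2, eq'_cancel _ _ _ (by positivity), mul_comm]

/-- For an odd prime `p`: `G_{p^k} = p^{k/2}` if `k` is even, and
`G_{p^k} = p^{(k−1)/2} · G_p` if `k` is odd. -/
theorem quadGaussSum_prime_pow (p : ℕ) (hp : p.Prime) (hodd : Odd p) (k : ℕ) :
    (Even k → quadGaussSum (p^k) = (p : ℂ)^(k/2)) ∧
    (Odd k → quadGaussSum (p^k) = (p : ℂ)^((k-1)/2) * quadGaussSum p) := by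
  induction k using Nat.twoStepInduction with
  | zero =>
    constructor
    · intro _
      rw [pow_zero, quadGaussSum_eq]
      simp [eq'_zero]
    · intro h
      exact absurd h (by decide)
  | one =>
    constructor
    · intro h
      exact absurd h (by decide)
    · intro _
      simp
  | more k ih _ =>
    have hred := red p hp hodd k
    constructor
    · intro he
      have hek : Even k := by
        rcases he with ⟨j, hj⟩
        exact ⟨j - 1, by omega⟩
      rw [hred, ih.1 hek]
      rw [show (k + 2) / 2 = k / 2 + 1 by omega, pow_succ]
      ring
    · intro ho
      have hok : Odd k := by
        rcases ho with ⟨j, hj⟩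
        exact ⟨j - 1, by omega⟩
      obtain ⟨j, hj⟩ := hok
      rw [hred, ih.2 ⟨j, hj⟩]
      rw [show (k + 2 - 1) / 2 = (k - 1) / 2 + 1 by omega, pow_succ]
      ring
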